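/- Let Q8 denote the quaternion group of order 8 (QuaternionGroup 2 in Mathlib). There exists a finite symmetric generating set A of the direct product Q8 × Q8 such that the geodesic language Geo(Q8 × Q8, A) is not piecewise excluding. In particular, the class of groups having piecewise excluding geodesic language for all finite symmetric generating sets is not closed under direct products. -/

import Mathlib

/-- `w` is a word over the alphabet `A`: every letter of `w` lies in `A`. -/
def IsWordOver {G : Type*} (A : Finset G) (w : List G) : Prop :=
  ∀ x ∈ w, x ∈ A

/-- `A` is a finite symmetric (inverse-closed) generating set of the group `G`. -/
def IsSymmGen {G : Type*} [Group G] (A : Finset G) : Prop :=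
  Subgroup.closure (A : Set G) = ⊤ ∧ ∀ a ∈ A, a⁻¹ ∈ A

/-- `w` is a geodesic word over `A`: no word over `A` of strictly smaller length
evaluates to the same element of `G`. -/
def IsGeodesic {G : Type*} [Group G] (A : Finset G) (w : List G) : Prop :=
  IsWordOver A w ∧
    ∀ v : List G, IsWordOver A v → v.prod = w.prod → w.length ≤ v.length

/-- The geodesic language of `G` over `A`. -/
def Geo {G : Type*} [Group G] (A : Finset G) : Set (List G) :=
  {w | IsGeodesic A w}

/-- A language `L` of words over `A` is piecewise excluding if there is a finite set `F`
of words over `A` such that a word `w` over `A` lies in `L` iff no element of `F` is a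
piecewise subword (i.e. a not-necessarily-contiguous subsequence) of `w`. -/
def PiecewiseExcluding {G : Type*} (A : Finset G) (L : Set (List G)) : Prop :=
  ∃ F : Finset (List G), (∀ u ∈ F, IsWordOver A u) ∧
    ∀ w : List G, IsWordOver A w → (w ∈ L ↔ ∀ u ∈ F, ¬ List.Sublist u w)

set_option linter.unusedSectionVars false

section General

variable {G : Type*} [Group G] [DecidableEq G]

/-- One step of ball growth. -/
def ballStep (A b : Finset G) : Finset G :=
  b ∪ A.biUnion fun a => b.image (a * ·)

def ball (A : Finset G) : ℕ → Finset G
  | 0 => {1}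
  | n + 1 => ballStep A (ball A n)

theorem mem_ball {A : Finset G} {n : ℕ} {g : G} :
    g ∈ ball A n ↔ ∃ w : List G, IsWordOver A w ∧ w.length ≤ n ∧ w.prod = g := by
  induction n generalizing g with
  | zero =>
    simp only [ball, Finset.mem_singleton]
    constructor
    · rintro rfl
      exact ⟨[], fun x hx => absurd hx (List.not_mem_nil), by simp, by simp⟩
    · rintro ⟨w, -, hlen, rfl⟩
      rw [List.length_eq_zero_iff.mp (Nat.le_zero.mp hlen)]; simp
  | succ n ih =>
    simp only [ball, ballStep, Finset.mem_union, Finset.mem_biUnion, Finset.mem_image]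
    constructor
    · rintro (h | ⟨a, ha, h, hh, rfl⟩)
      · obtain ⟨w, hw, hlen, hp⟩ := ih.mp h
        exact ⟨w, hw, hlen.trans (Nat.le_succ n), hp⟩
      · obtain ⟨w, hw, hlen, hp⟩ := ih.mp hh
        refine ⟨a :: w, ?_, by simpa using hlen, by simp [hp]⟩
        intro x hx
        rcases List.mem_cons.mp hx with rfl | hx
        · exact ha
        · exact hw x hx
    · rintro ⟨w, hw, hlen, rfl⟩
      match w with
      | [] => exact Or.inl (ih.mpr ⟨[], hw, Nat.zero_le n, rfl⟩)
      | a :: v =>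
        refine Or.inr ⟨a, hw a (List.mem_cons_self), v.prod, ?_, by simp⟩
        exact ih.mpr ⟨v, fun x hx => hw x (List.mem_cons_of_mem a hx),
          by have := hlen; simp at this; omega, rfl⟩

variable [Fintype G]

theorem exists_short_aux (A : Finset G) :
    ∀ (k : ℕ) (w : List G), w.length ≤ k → IsWordOver A w →
      ∃ v : List G, IsWordOver A v ∧ v.prod = w.prod ∧ v.length ≤ w.length ∧
        v.length < Fintype.card G := by
  intro k
  induction k with
  | zero =>
    intro w hlen hw
    refine ⟨w, hw, rfl, le_rfl, ?_⟩
    have := Fintype.card_pos (α := G)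
    omega
  | succ k ih =>
    intro w hlen hw
    by_cases hc : w.length < Fintype.card G
    · exact ⟨w, hw, rfl, le_rfl, hc⟩
    push_neg at hc
    have hcard : Fintype.card G < Fintype.card (Fin (w.length + 1)) := by
      simpa using Nat.lt_succ_of_le hc
    obtain ⟨i, j, hne, hij⟩ :=
      Fintype.exists_ne_map_eq_of_card_lt (fun i : Fin (w.length + 1) => (w.take i).prod) hcard
    have main : ∀ (i j : Fin (w.length + 1)), (i : ℕ) < j →
        (w.take i).prod = (w.take j).prod →
        ∃ v : List G, IsWordOver A v ∧ v.prod = w.prod ∧ v.length < w.length := by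
      intro i j hlt heq
      refine ⟨w.take i ++ w.drop j, ?_, ?_, ?_⟩
      · intro x hx
        rcases List.mem_append.mp hx with h | h
        · exact hw x (List.take_subset _ _ h)
        · exact hw x (List.drop_subset _ _ h)
      · rw [List.prod_append, heq, ← List.prod_append, List.take_append_drop]
      · have hj : (j : ℕ) ≤ w.length := Nat.lt_succ_iff.mp j.isLt
        rw [List.length_append, List.length_take, List.length_drop]
        omega
    have step : ∃ v : List G, IsWordOver A v ∧ v.prod = w.prod ∧ v.length < w.length := by
      rcases lt_or_gt_of_ne hne with h | h
      · exact main i j h hij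
      · exact main j i h hij.symm
    obtain ⟨v, hv, hvp, hvl⟩ := step
    obtain ⟨v', hv', hv'p, hv'l, hv'c⟩ := ih v (by omega) hv
    exact ⟨v', hv', hv'p.trans hvp, by omega, hv'c⟩

theorem exists_short (A : Finset G) (w : List G) (hw : IsWordOver A w) :
    ∃ v : List G, IsWordOver A v ∧ v.prod = w.prod ∧ v.length ≤ w.length ∧
      v.length < Fintype.card G :=
  exists_short_aux A w.length w le_rfl hw

theorem geodesic_length_lt {A : Finset G} {w : List G} (h : IsGeodesic A w) :
    w.length < Fintype.card G := by
  obtain ⟨v, hv, hvp, -, hvc⟩ := exists_short A w h.1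
  exact lt_of_le_of_lt (h.2 v hv hvp) hvc

end General

section General2

variable {G : Type*} [Group G] [DecidableEq G]

theorem isGeodesic_iff_ball (A : Finset G) (w : List G) :
    IsGeodesic A w ↔ IsWordOver A w ∧ ∀ m < w.length, w.prod ∉ ball A m := by
  constructor
  · rintro ⟨hw, hgeo⟩
    refine ⟨hw, fun m hm hmem => ?_⟩
    obtain ⟨v, hv, hvl, hvp⟩ := mem_ball.mp hmem
    have := hgeo v hv hvp
    omega
  · rintro ⟨hw, hb⟩
    refine ⟨hw, fun v hv hvp => ?_⟩
    by_contra hlt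
    push_neg at hlt
    exact hb v.length hlt (mem_ball.mpr ⟨v, hv, le_rfl, hvp⟩)

instance decIsWordOver (A : Finset G) (w : List G) : Decidable (IsWordOver A w) :=
  List.decidableBAll _ w

instance decIsGeodesic (A : Finset G) : DecidablePred (IsGeodesic A) := fun w =>
  decidable_of_iff _ (isGeodesic_iff_ball A w).symm

/-- One step of geodesic-word growth: extend previous geodesic words by a letter,
keeping those whose product leaves the previous ball. -/
def gwStep (A : Finset G) (b : Finset G) (p : Finset (List G)) : Finset (List G) :=
  (A.biUnion fun a => p.image (a :: ·)).filter fun w => w.prod ∉ b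

def gw (A : Finset G) : ℕ → Finset (List G)
  | 0 => {[]}
  | n + 1 => gwStep A (ball A n) (gw A n)

theorem ball_mono {A : Finset G} {m n : ℕ} (h : m ≤ n) : ball A m ⊆ ball A n := by
  intro g hg
  obtain ⟨v, hv, hvl, hvp⟩ := mem_ball.mp hg
  exact mem_ball.mpr ⟨v, hv, hvl.trans h, hvp⟩

theorem mem_gw {A : Finset G} {n : ℕ} {w : List G} :
    w ∈ gw A n ↔ IsGeodesic A w ∧ w.length = n := by
  induction n generalizing w with
  | zero =>
    simp only [gw, Finset.mem_singleton]
    constructor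
    · rintro rfl
      exact ⟨⟨fun x hx => absurd hx (List.not_mem_nil), fun v _ _ => Nat.zero_le _⟩, rfl⟩
    · rintro ⟨-, hlen⟩
      exact List.length_eq_zero_iff.mp hlen
  | succ n ih =>
    simp only [gw, gwStep, Finset.mem_filter, Finset.mem_biUnion, Finset.mem_image]
    constructor
    · rintro ⟨⟨a, ha, v, hv, rfl⟩, hnb⟩
      obtain ⟨⟨hvword, -⟩, hvlen⟩ := ih.mp hv
      have hword : IsWordOver A (a :: v) := by
        intro x hx
        rcases List.mem_cons.mp hx with rfl | hx
        · exact ha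
        · exact hvword x hx
      refine ⟨(isGeodesic_iff_ball A _).mpr ⟨hword, fun m hm hmem => ?_⟩, by simp [hvlen]⟩
      have hmn : m ≤ n := by
        simp only [List.length_cons, hvlen] at hm
        omega
      exact hnb (ball_mono hmn hmem)
    · rintro ⟨hgeo, hlen⟩
      match w with
      | a :: v =>
        have hvlen : v.length = n := by simpa using hlen
        have ha : a ∈ A := hgeo.1 a (List.mem_cons_self)
        have hvword : IsWordOver A v := fun x hx => hgeo.1 x (List.mem_cons_of_mem a hx)
        refine ⟨⟨a, ha, v, ih.mpr ⟨⟨hvword, fun u hu hup => ?_⟩, hvlen⟩, rfl⟩, ?_⟩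
        · have hword : IsWordOver A (a :: u) := by
            intro x hx
            rcases List.mem_cons.mp hx with rfl | hx
            · exact ha
            · exact hu x hx
          have := hgeo.2 (a :: u) hword (by simp [hup])
          simpa using this
        · exact ((isGeodesic_iff_ball A _).mp hgeo).2 n (by simp [hvlen])

theorem closure_eq_top_of_ball {A : Finset G} {n : ℕ} (h : ∀ g : G, g ∈ ball A n) :
    Subgroup.closure (A : Set G) = ⊤ := by
  rw [eq_top_iff]
  intro g _
  obtain ⟨w, hw, -, hwp⟩ := mem_ball.mp (h g)
  rw [← hwp]
  exact Subgroup.list_prod_mem _ fun x hx => Subgroup.subset_closure (hw x hx)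

theorem ball_reach [Fintype G] {A : Finset G} (hsym : ∀ a ∈ A, a⁻¹ ∈ A)
    (hcl : Subgroup.closure (A : Set G) = ⊤) (g : G) :
    g ∈ ball A (Fintype.card G - 1) := by
  have hg : g ∈ Subgroup.closure (A : Set G) := hcl ▸ Subgroup.mem_top g
  have hword : ∃ w : List G, IsWordOver A w ∧ w.prod = g := by
    induction hg using Subgroup.closure_induction with
    | mem x hx =>
      exact ⟨[x], fun y hy => by rwa [List.mem_singleton.mp hy], by simp⟩
    | one => exact ⟨[], fun y hy => absurd hy (List.not_mem_nil), by simp⟩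
    | mul x y hx hy ihx ihy =>
      obtain ⟨wx, hwx, hwxp⟩ := ihx
      obtain ⟨wy, hwy, hwyp⟩ := ihy
      refine ⟨wx ++ wy, fun z hz => ?_, by simp [hwxp, hwyp]⟩
      rcases List.mem_append.mp hz with h | h
      · exact hwx z h
      · exact hwy z h
    | inv x hx ihx =>
      obtain ⟨w, hw, hwp⟩ := ihx
      refine ⟨(w.map fun y => y⁻¹).reverse, fun z hz => ?_, ?_⟩
      · simp only [List.mem_reverse, List.mem_map] at hz
        obtain ⟨y, hy, rfl⟩ := hz
        exact hsym y (hw y hy)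
      · rw [← List.prod_inv_reverse, hwp]
  obtain ⟨w, hw, hwp⟩ := hword
  obtain ⟨v, hv, hvp, -, hvc⟩ := exists_short A w hw
  exact mem_ball.mpr ⟨v, hv, by omega, hvp.trans hwp⟩

def allWStep (A : Finset G) (p : Finset (List G)) : Finset (List G) :=
  p ∪ A.biUnion fun a => p.image (a :: ·)

def allW (A : Finset G) : ℕ → Finset (List G)
  | 0 => {[]}
  | n + 1 => allWStep A (allW A n)

theorem mem_allW {A : Finset G} {n : ℕ} {w : List G} :
    w ∈ allW A n ↔ IsWordOver A w ∧ w.length ≤ n := by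
  induction n generalizing w with
  | zero =>
    simp only [allW, Finset.mem_singleton]
    constructor
    · rintro rfl
      exact ⟨fun x hx => absurd hx (List.not_mem_nil), by simp⟩
    · rintro ⟨-, hlen⟩
      exact List.length_eq_zero_iff.mp (Nat.le_zero.mp hlen)
  | succ n ih =>
    simp only [allW, allWStep, Finset.mem_union, Finset.mem_biUnion, Finset.mem_image]
    constructor
    · rintro (h | ⟨a, ha, v, hv, rfl⟩)
      · obtain ⟨hw, hlen⟩ := ih.mp h
        exact ⟨hw, hlen.trans (Nat.le_succ n)⟩
      · obtain ⟨hw, hlen⟩ := ih.mp hv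
        refine ⟨fun x hx => ?_, by simpa using hlen⟩
        rcases List.mem_cons.mp hx with rfl | hx
        · exact ha
        · exact hw x hx
    · rintro ⟨hw, hlen⟩
      match w with
      | [] => exact Or.inl (ih.mpr ⟨hw, Nat.zero_le n⟩)
      | a :: v =>
        refine Or.inr ⟨a, hw a (List.mem_cons_self), v, ?_, rfl⟩
        exact ih.mpr ⟨fun x hx => hw x (List.mem_cons_of_mem a hx),
          by have := hlen; simp at this; omega⟩

theorem pe_of_closed [Fintype G] (A : Finset G)
    (hcl : ∀ w : List G, IsGeodesic A w → ∀ u : List G, u.Sublist w → IsGeodesic A u) :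
    PiecewiseExcluding A (Geo A) := by
  set N := Fintype.card G with hN
  refine ⟨(allW A N).filter fun u => ¬ IsGeodesic A u, ?_, ?_⟩
  · intro u hu
    exact (mem_allW.mp (Finset.mem_filter.mp hu).1).1
  · intro w hw
    constructor
    · intro hwg u hu hsub
      obtain ⟨hu1, hu2⟩ := Finset.mem_filter.mp hu
      exact hu2 (hcl w hwg u hsub)
    · intro h
      by_contra hng
      by_cases hlen : w.length ≤ N
      · exact h w (Finset.mem_filter.mpr ⟨mem_allW.mpr ⟨hw, hlen⟩, hng⟩) (List.Sublist.refl w)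
      · push_neg at hlen
        refine h (w.take N) (Finset.mem_filter.mpr ⟨mem_allW.mpr
          ⟨fun x hx => hw x (List.take_subset _ _ hx), le_of_eq ?_⟩, fun hg => ?_⟩)
          (List.take_sublist N w)
        · rw [List.length_take]; omega
        · have := geodesic_length_lt hg
          rw [List.length_take] at this
          omega

theorem closed_of_pe (A : Finset G) (h : PiecewiseExcluding A (Geo A)) :
    ∀ w : List G, IsGeodesic A w → ∀ u : List G, u.Sublist w → IsGeodesic A u := by
  obtain ⟨F, -, hiff⟩ := h
  intro w hwg u hsub
  have hwword : IsWordOver A w := hwg.1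
  have huword : IsWordOver A u := fun x hx => hwword x (hsub.subset hx)
  refine (hiff u huword).mpr fun f hf hfs => ?_
  exact (hiff w hwword).mp hwg f hf (hfs.trans hsub)

end General2

set_option maxRecDepth 100000
set_option maxHeartbeats 4000000

section Concrete

open QuaternionGroup

abbrev Q8 := QuaternionGroup 2

/-- The generating set of `Q₈ × Q₈` witnessing failure of piecewise exclusion. -/
def A₂ : Finset (Q8 × Q8) :=
  {(a 1, a 0), (a 3, a 0), (a 0, a 1), (a 0, a 3),
   (a 0, xa 0), (a 0, xa 2), (xa 0, xa 0), (xa 2, xa 2)}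

theorem part1_check : ∀ A : Finset Q8,
    ((∀ x ∈ A, x⁻¹ ∈ A) ∧ ∀ g : Q8, g ∈ ball A 7) →
    ∀ n < 8, ∀ w ∈ gw A n, ∀ u ∈ w.sublists, IsGeodesic A u := by
  decide

theorem card_Q8 : Fintype.card Q8 = 8 := by
  rw [QuaternionGroup.card]

theorem quaternion_product_not_piecewise_excluding' :
    (∀ A : Finset (QuaternionGroup 2), IsSymmGen A → PiecewiseExcluding A (Geo A)) ∧
    ∃ A : Finset (QuaternionGroup 2 × QuaternionGroup 2),
      IsSymmGen A ∧ ¬ PiecewiseExcluding A (Geo A) := by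
  constructor
  · intro A hA
    apply pe_of_closed
    intro w hwg u hsub
    have hreach : ∀ g : Q8, g ∈ ball A 7 := by
      have := ball_reach hA.2 hA.1
      rwa [card_Q8] at this
    have hlen : w.length < 8 := by
      have := geodesic_length_lt hwg
      rwa [card_Q8] at this
    exact part1_check A ⟨hA.2, hreach⟩ w.length hlen w (mem_gw.mpr ⟨hwg, rfl⟩) u
      (List.mem_sublists.mpr hsub)
  · refine ⟨A₂, ⟨?_, ?_⟩, ?_⟩
    · exact closure_eq_top_of_ball (n := 4) (by decide)
    · decide
    · intro h
      have hcl := closed_of_pe A₂ h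
      set w : List (Q8 × Q8) := [(a 0, a 1), (xa 0, xa 0), (a 0, a 3)] with hw
      set u : List (Q8 × Q8) := [(a 0, a 1), (a 0, a 3)] with hu
      have hwg : IsGeodesic A₂ w := by
        rw [isGeodesic_iff_ball]
        constructor
        · decide
        · decide
      have hsub : u.Sublist w := by decide
      have hug : IsGeodesic A₂ u := hcl w hwg u hsub
      have : u.length ≤ ([] : List (Q8 × Q8)).length :=
        hug.2 [] (fun x hx => absurd hx (List.not_mem_nil)) (by decide)
      simp [hu] at this

end Concrete

theorem quaternion_product_not_piecewise_excluding :
    (∀ A : Finset (QuaternionGroup 2), IsSymmGen A → PiecewiseExcluding A (Geo A)) ∧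
    ∃ A : Finset (QuaternionGroup 2 × QuaternionGroup 2),
      IsSymmGen A ∧ ¬ PiecewiseExcluding A (Geo A) :=
  quaternion_product_not_piecewise_excluding'
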